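/- Let N ∈ ℕ, 1 ≤ n⁺ ≤ N, let W⁺ be a probability weighting function (in particular inverse S-shaped), and let h⁺ be the gain decision weights. Then there exists a unique index ĵ ∈ {1,…,n⁺} such that h⁺_{n⁺} > h⁺_{n⁺−1} > … > h⁺_{ĵ} (a strictly decreasing chain from index n⁺ down to ĵ, vacuous if ĵ = n⁺) and h⁺_{ĵ} ≤ h⁺_{ĵ−1} < h⁺_{ĵ−2} < … < h⁺_1 (vacuous if ĵ = 1); such an index is called a flexional index. -/

import Mathlib

open Finset

/-- An inverse S-shaped function on `[0,1]`: strictly increasing, continuously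
differentiable, with a derivative strictly decreasing then strictly increasing. -/
def InverseSShaped (W : ℝ → ℝ) : Prop :=
  StrictMonoOn W (Set.Icc (0 : ℝ) 1) ∧
  ContDiffOn ℝ 1 W (Set.Icc (0 : ℝ) 1) ∧
  ∃ x₀ ∈ Set.Icc (0 : ℝ) 1,
    StrictAntiOn (deriv W) (Set.Icc (0 : ℝ) x₀) ∧ StrictMonoOn (deriv W) (Set.Icc x₀ 1)

/-- A probability weighting function: inverse S-shaped with `W 0 = 0` and `W 1 = 1`. -/
def IsPWF (W : ℝ → ℝ) : Prop :=
  InverseSShaped W ∧ W 0 = 0 ∧ W 1 = 1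

/-- Gain decision weights: `h⁺_j = W⁺((n−j+1)/N) − W⁺((n−j)/N)` for `j = 1,…,n`. -/
noncomputable def gainW (W : ℝ → ℝ) (N n j : ℕ) : ℝ :=
  W (((n : ℝ) - j + 1) / N) - W (((n : ℝ) - j) / N)

/-- The transitional index
`J = min{ j ∈ {1,…,n} : j = n ∨ j·h⁺_{j+1} ≥ ∑_{j'≤j} h⁺_{j'} }`. -/
noncomputable def transIdx (W : ℝ → ℝ) (N n : ℕ) : ℕ :=
  sInf {j : ℕ | 1 ≤ j ∧ j ≤ n ∧
    (j = n ∨ ∑ j' ∈ Finset.Icc 1 j, gainW W N n j' ≤ (j : ℝ) * gainW W N n (j + 1))}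

/-- `jhat` is a flexional index for the gain decision weights:
`h⁺_n > h⁺_{n−1} > … > h⁺_jhat` and `h⁺_jhat ≤ h⁺_{jhat−1} < h⁺_{jhat−2} < … < h⁺_1`. -/
def IsFlexIdx (W : ℝ → ℝ) (N n jhat : ℕ) : Prop :=
  1 ≤ jhat ∧ jhat ≤ n ∧
  (∀ j : ℕ, jhat ≤ j → j < n → gainW W N n j < gainW W N n (j + 1)) ∧
  (jhat = 1 ∨ gainW W N n jhat ≤ gainW W N n (jhat - 1)) ∧
  (∀ j : ℕ, 1 ≤ j → j + 1 ≤ jhat - 1 → gainW W N n (j + 1) < gainW W N n j)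

lemma quasi_aux (W : ℝ → ℝ) (hW : IsPWF W) (δ : ℝ) (hδ : 0 < δ) (hδ1 : δ ≤ 1) :
    ∃ c ∈ Set.Icc (0:ℝ) (1-δ),
      StrictAntiOn (fun x => W (x+δ) - W x) (Set.Icc 0 c) ∧
      StrictMonoOn (fun x => W (x+δ) - W x) (Set.Icc c (1-δ)) := by
  obtain ⟨⟨hMono, hC1, x₀, hx₀, hAnti, hMon⟩, _, _⟩ := hW
  set D : ℝ → ℝ := fun x => W (x+δ) - W x with hD
  -- differentiability of W at interior points
  have hdiff : ∀ y ∈ Set.Ioo (0:ℝ) 1, DifferentiableAt ℝ W y := by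
    intro y hy
    have h1 := (hC1.differentiableOn one_ne_zero) y ⟨hy.1.le, hy.2.le⟩
    exact h1.differentiableAt (Icc_mem_nhds hy.1 hy.2)
  have hDderiv : ∀ x ∈ Set.Ioo (0:ℝ) (1-δ),
      HasDerivAt D (deriv W (x+δ) - deriv W x) x := by
    intro x hx
    have hx1 : x ∈ Set.Ioo (0:ℝ) 1 := ⟨hx.1, by linarith [hx.2]⟩
    have hx2 : x + δ ∈ Set.Ioo (0:ℝ) 1 := ⟨by linarith [hx.1], by linarith [hx.2]⟩
    have h1 : HasDerivAt (fun y => W (y + δ)) (deriv W (x+δ)) x := by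
      have := ((hdiff (x+δ) hx2).hasDerivAt).comp x ((hasDerivAt_id x).add_const δ)
      simpa [Function.comp_def] using this
    exact h1.sub (hdiff x hx1).hasDerivAt
  have hWc : ContinuousOn W (Set.Icc (0:ℝ) 1) := hC1.continuousOn
  have hDc : ContinuousOn D (Set.Icc (0:ℝ) (1-δ)) := by
    apply ContinuousOn.sub
    · exact hWc.comp (continuous_id.add continuous_const).continuousOn
        (fun x hx => ⟨by linarith [hx.1], by linarith [hx.2]⟩)
    · exact hWc.mono (fun x hx => ⟨hx.1, by linarith [hx.2]⟩)
  set T : Set ℝ := {x | x ∈ Set.Icc (0:ℝ) (1-δ) ∧ 0 ≤ deriv W (x+δ) - deriv W x} with hT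
  set c : ℝ := sInf (insert (1-δ) T) with hc
  have hne : (insert (1-δ) T).Nonempty := ⟨1-δ, Set.mem_insert _ _⟩
  have hbdd : BddBelow (insert (1-δ) T) := by
    refine ⟨0, ?_⟩
    rintro y (rfl | hy)
    · linarith
    · exact hy.1.1
  have hcle : c ≤ 1 - δ := csInf_le hbdd (Set.mem_insert _ _)
  have hc0 : 0 ≤ c := by
    apply le_csInf hne
    rintro y (rfl | hy)
    · linarith
    · exact hy.1.1
  have hneg : ∀ x ∈ Set.Icc (0:ℝ) (1-δ), x < c → deriv W (x+δ) - deriv W x < 0 := by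
    intro x hx hxc
    by_contra h
    push_neg at h
    have : x ∈ insert (1-δ) T := Set.mem_insert_of_mem _ ⟨hx, h⟩
    exact absurd (csInf_le hbdd this) (not_le.mpr hxc)
  have hpos : ∀ x ∈ Set.Icc (0:ℝ) (1-δ), c < x → 0 < deriv W (x+δ) - deriv W x := by
    intro x hx hcx
    by_cases hxx0 : x₀ ≤ x
    · have hm1 : x ∈ Set.Icc x₀ 1 := ⟨hxx0, by linarith [hx.2]⟩
      have hm2 : x + δ ∈ Set.Icc x₀ 1 := ⟨by linarith, by linarith [hx.2]⟩
      have := hMon hm1 hm2 (by linarith)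
      linarith
    · push_neg at hxx0
      obtain ⟨s, hs, hsx⟩ := exists_lt_of_csInf_lt hne hcx
      rcases hs with rfl | hs
      · linarith [hx.2]
      · obtain ⟨hsI, hsφ⟩ := hs
        have hsδ : x₀ < s + δ := by
          by_contra h
          push_neg at h
          have hm1 : s ∈ Set.Icc (0:ℝ) x₀ := ⟨hsI.1, by linarith⟩
          have hm2 : s + δ ∈ Set.Icc (0:ℝ) x₀ := ⟨by linarith [hsI.1], h⟩
          have := hAnti hm1 hm2 (by linarith)
          linarith
        have hm1 : s ∈ Set.Icc (0:ℝ) x₀ := ⟨hsI.1, by linarith⟩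
        have hm2 : x ∈ Set.Icc (0:ℝ) x₀ := ⟨hx.1, hxx0.le⟩
        have h1 : deriv W x < deriv W s := hAnti hm1 hm2 hsx
        have hm3 : s + δ ∈ Set.Icc x₀ 1 := ⟨hsδ.le, by linarith [hx.2]⟩
        have hm4 : x + δ ∈ Set.Icc x₀ 1 := ⟨by linarith, by linarith [hx.2]⟩
        have h2 : deriv W (s+δ) < deriv W (x+δ) := hMon hm3 hm4 (by linarith)
        linarith
  refine ⟨c, ⟨hc0, hcle⟩, ?_, ?_⟩
  · apply strictAntiOn_of_deriv_neg (convex_Icc _ _)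
      (hDc.mono (fun x hx => ⟨hx.1, by linarith [hx.2]⟩))
    intro x hx
    rw [interior_Icc] at hx
    have hx' : x ∈ Set.Ioo (0:ℝ) (1-δ) := ⟨hx.1, by linarith [hx.2]⟩
    rw [(hDderiv x hx').deriv]
    exact hneg x ⟨hx.1.le, hx'.2.le⟩ hx.2
  · apply strictMonoOn_of_deriv_pos (convex_Icc _ _)
      (hDc.mono (fun x hx => ⟨by linarith [hx.1], hx.2⟩))
    intro x hx
    rw [interior_Icc] at hx
    have hx' : x ∈ Set.Ioo (0:ℝ) (1-δ) := ⟨by linarith [hx.1], hx.2⟩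
    rw [(hDderiv x hx').deriv]
    exact hpos x ⟨hx'.1.le, hx.2.le⟩ hx.1

/-- there exists a unique flexional index. -/
theorem exists_unique_flexional_index (W : ℝ → ℝ) (N n : ℕ)
    (hW : IsPWF W) (hn1 : 1 ≤ n) (hnN : n ≤ N) :
    ∃! jhat : ℕ, IsFlexIdx W N n jhat := by
  have hN1 : 1 ≤ N := le_trans hn1 hnN
  have hN0 : (0:ℝ) < N := by exact_mod_cast Nat.pos_of_ne_zero (by omega)
  set δ : ℝ := 1 / N with hδdef
  have hδ : 0 < δ := by positivity
  have hδ1 : δ ≤ 1 := by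
    rw [hδdef, div_le_one hN0]
    exact_mod_cast hN1
  obtain ⟨c, hcI, hAntiD, hMonD⟩ := quasi_aux W hW δ hδ hδ1
  -- gainW in terms of D
  have hg : ∀ j : ℕ, gainW W N n j =
      (fun x => W (x+δ) - W x) (((n:ℝ) - j)/N) := by
    intro j
    simp only [gainW, hδdef, ← add_div]
  -- the x points lie in [0, 1-δ]
  have hxmem : ∀ j : ℕ, 1 ≤ j → j ≤ n → ((n:ℝ) - j)/N ∈ Set.Icc (0:ℝ) (1-δ) := by
    intro j hj1 hjn
    constructor
    · apply div_nonneg _ hN0.le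
      have : (j:ℝ) ≤ n := by exact_mod_cast hjn
      linarith
    · rw [hδdef]
      rw [div_le_iff₀ hN0]
      have h1 : (1:ℝ) ≤ j := by exact_mod_cast hj1
      have h2 : (n:ℝ) ≤ N := by exact_mod_cast hnN
      field_simp
      linarith
  -- step lemma
  have step : ∀ j : ℕ, 1 ≤ j → j + 2 ≤ n →
      gainW W N n j ≤ gainW W N n (j+1) → gainW W N n (j+1) < gainW W N n (j+2) := by
    intro j hj1 hjn hle
    set D : ℝ → ℝ := fun x => W (x+δ) - W x with hD
    have e0 : gainW W N n j = D (((n:ℝ) - j)/N) := hg j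
    have e1 : gainW W N n (j+1) = D (((n:ℝ) - j - 1)/N) := by
      rw [hg (j+1)]; push_cast; ring_nf
    have e2 : gainW W N n (j+2) = D (((n:ℝ) - j - 2)/N) := by
      rw [hg (j+2)]; push_cast; ring_nf
    set p : ℝ := ((n:ℝ) - j - 2)/N
    set q : ℝ := ((n:ℝ) - j - 1)/N
    set r : ℝ := ((n:ℝ) - j)/N
    have hpm : p ∈ Set.Icc (0:ℝ) (1-δ) := by
      have := hxmem (j+2) (by omega) hjn
      have he : ((n:ℝ) - (j+2:ℕ))/N = p := by show ((n:ℝ) - (j+2:ℕ))/N = ((n:ℝ) - j - 2)/N; push_cast; ring_nf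
      rwa [he] at this
    have hqm : q ∈ Set.Icc (0:ℝ) (1-δ) := by
      have := hxmem (j+1) (by omega) (by omega)
      have he : ((n:ℝ) - (j+1:ℕ))/N = q := by show ((n:ℝ) - (j+1:ℕ))/N = ((n:ℝ) - j - 1)/N; push_cast; ring_nf
      rwa [he] at this
    have hrm : r ∈ Set.Icc (0:ℝ) (1-δ) := hxmem j hj1 (by omega)
    have hpq : p < q := by
      apply div_lt_div_of_pos_right ?_ hN0
      linarith
    have hqr : q < r := by
      apply div_lt_div_of_pos_right ?_ hN0
      linarith
    rw [e0, e1] at hle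
    rw [e1, e2]
    by_cases hcq : c ≤ q
    · exfalso
      have := hMonD ⟨hcq, hqm.2⟩ ⟨le_trans hcq hqr.le, hrm.2⟩ hqr
      linarith
    · push_neg at hcq
      exact hAntiD ⟨hpm.1, by linarith⟩ ⟨hqm.1, hcq.le⟩ hpq
  -- the set of indices from which the weights strictly increase
  set S : Set ℕ := {j : ℕ | 1 ≤ j ∧
      ∀ k, j ≤ k → k < n → gainW W N n k < gainW W N n (k+1)} with hS
  have hnS : n ∈ S := ⟨hn1, fun k hk hk' => absurd (lt_of_le_of_lt hk hk') (lt_irrefl n)⟩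
  have hSne : S.Nonempty := ⟨n, hnS⟩
  set jhat : ℕ := sInf S with hjhat
  obtain ⟨hj1, hjinc⟩ : jhat ∈ S := Nat.sInf_mem hSne
  have hjn : jhat ≤ n := Nat.sInf_le hnS
  have flex : IsFlexIdx W N n jhat := by
    refine ⟨hj1, hjn, hjinc, ?_, ?_⟩
    · by_cases h1 : jhat = 1
      · exact Or.inl h1
      · right
        have h2 : 2 ≤ jhat := by omega
        have hnm : jhat - 1 ∉ S := Nat.notMem_of_lt_sInf (by omega)
        rw [hS, Set.mem_setOf_eq] at hnm
        push_neg at hnm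
        obtain ⟨k, hk1, hk2, hk3⟩ := hnm (by omega)
        have hkeq : k = jhat - 1 := by
          by_contra hne'
          exact absurd (hjinc k (by omega) hk2) (not_lt.mpr hk3)
        subst hkeq
        have : jhat - 1 + 1 = jhat := by omega
        rw [this] at hk3
        exact hk3
    · intro j hj1' hj2'
      by_contra hcon
      have hcon' : gainW W N n j ≤ gainW W N n (j+1) := le_of_not_gt hcon
      have chain : ∀ k, j+1 ≤ k → k < n → gainW W N n k < gainW W N n (k+1) := by
        intro k hk
        induction k, hk using Nat.le_induction with
        | base =>
          intro hkn
          exact step j hj1' (by omega) hcon'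
        | succ k hk ih =>
          intro hkn
          have h1 := ih (by omega)
          exact step k (by omega) (by omega) h1.le
      have hmem : j+1 ∈ S := ⟨by omega, chain⟩
      have := Nat.sInf_le hmem
      omega
  refine ⟨jhat, flex, ?_⟩
  -- uniqueness
  have key : ∀ a b : ℕ, IsFlexIdx W N n a → IsFlexIdx W N n b → a < b → False := by
    rintro a b ⟨ha1, han, hainc, -, -⟩ ⟨hb1, hbn, -, hbdec, -⟩ hab
    have h1 : gainW W N n (b-1) < gainW W N n (b-1+1) :=
      hainc (b-1) (by omega) (by omega)
    have hbe : b - 1 + 1 = b := by omega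
    rw [hbe] at h1
    rcases hbdec with h | h
    · omega
    · linarith
  intro y hy
  rcases lt_trichotomy y jhat with h | h | h
  · exact absurd (key y jhat hy flex h) not_false
  · exact h
  · exact absurd (key jhat y flex hy h) not_false
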